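/- Let N be a finite set, k ≤ |N|, let (φ_i)_{i∈N} be real numbers (the Shapley values), M ≥ 1 an integer, and (σ_{i,j})_{i≠j} positive reals. Let K̂ be a random subset of N of size k and (φ̂_i)_{i∈N} real-valued random variables on the same probability space such that: (a) whenever φ̂_i > φ̂_j for all i ∈ K and j ∈ N\K for some size-k subset K, then K̂ = K; and (b) for every i ≠ j the random variable φ̂_i − φ̂_j has the Gaussian law with mean φ_i − φ_j and variance σ_{i,j}²/M. Then for any finite family 𝕂 of size-k subsets of N, P(K̂ ∈ 𝕂) ≥ Σ_{K ∈ 𝕂} [ 1 − Σ_{i ∈ K, j ∈ N\K} Φ( √M · (φ_j − φ_i) / σ_{i,j} ) ], where Φ is the standard normal cumulative distribution function. -/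

import Mathlib

open Finset MeasureTheory ProbabilityTheory

lemma gauss_prob_eq {Ω : Type*} [MeasurableSpace Ω] (P : Measure Ω) [IsProbabilityMeasure P]
    (X : Ω → ℝ) (hX : Measurable X) (μ : ℝ) (s : ℝ) (hs : 0 < s) (M : ℕ) (hM : 1 ≤ M)
    (hlaw : Measure.map X P = gaussianReal μ (Real.toNNReal (s ^ 2 / M))) :
    P {ω | X ω ≤ 0}
      = ENNReal.ofReal (cdf (gaussianReal 0 1) (Real.sqrt M * (-μ) / s)) := by
  have hM0 : (0 : ℝ) < M := by exact_mod_cast hM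
  set c : ℝ := Real.sqrt M / s with hc_def
  have hc : 0 < c := div_pos (Real.sqrt_pos.mpr hM0) hs
  set d : ℝ := -(c * μ) with hd_def
  have hmap1 : Measure.map (fun ω => c * X ω + d) P
      = Measure.map (fun x => x + d) (Measure.map (fun x => c * x) (Measure.map X P)) := by
    rw [Measure.map_map (measurable_add_const d) (measurable_const_mul c),
      Measure.map_map ((measurable_add_const d).comp (measurable_const_mul c)) hX]
    rfl
  have hmap2 : Measure.map (fun ω => c * X ω + d) P = gaussianReal 0 1 := by
    rw [hmap1, hlaw, gaussianReal_map_const_mul, gaussianReal_map_add_const]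
    congr 1
    · rw [hd_def]; ring
    · apply NNReal.coe_injective
      push_cast
      rw [Real.coe_toNNReal _ (by positivity), hc_def, div_pow, Real.sq_sqrt hM0.le]
      field_simp
  have hset : {ω | X ω ≤ 0} = (fun ω => c * X ω + d) ⁻¹' (Set.Iic d) := by
    ext ω
    simp only [Set.mem_setOf_eq, Set.mem_preimage, Set.mem_Iic, add_le_iff_nonpos_left]
    constructor
    · intro h; exact mul_nonpos_of_nonneg_of_nonpos hc.le h
    · intro h; nlinarith
  rw [hset, ← Measure.map_apply ((hX.const_mul c).add_const d) measurableSet_Iic, hmap2,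
    ← ofReal_cdf]
  congr 1
  rw [hd_def, hc_def]
  ring_nf

/-- Theorem 4.1 (inclusion-exclusion lower bound): if `K̂` equals any size-`k` subset
`K` whenever `φ̂_i > φ̂_j` for all `i ∈ K`, `j ∈ N\K`, and for every `i ≠ j` the
difference `φ̂_i − φ̂_j` is Gaussian with mean `φ_i − φ_j` and variance `σ_{i,j}²/M`,
then for any finite family `𝕂` of size-`k` subsets of `N`:
`P(K̂ ∈ 𝕂) ≥ ∑_{K ∈ 𝕂} (1 − ∑_{i ∈ K, j ∈ N\K} Φ(√M (φ_j − φ_i)/σ_{i,j}))`. -/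
theorem topk_gaussian_lower_bound
    {ι : Type*} [DecidableEq ι] (N : Finset ι) (k : ℕ) (hk : k ≤ N.card)
    (φ : ι → ℝ) (M : ℕ) (hM : 1 ≤ M) (σ : ι → ι → ℝ)
    (hσ : ∀ i j : ι, i ≠ j → 0 < σ i j)
    {Ω : Type*} [MeasurableSpace Ω] (P : Measure Ω) [IsProbabilityMeasure P]
    (Khat : Ω → Finset ι) (hKhat : ∀ ω, Khat ω ⊆ N ∧ (Khat ω).card = k)
    (φhat : ι → Ω → ℝ) (hmeas : ∀ i, Measurable (φhat i))
    (hsel : ∀ ω, ∀ K : Finset ι, K ⊆ N → K.card = k →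
      (∀ i ∈ K, ∀ j ∈ N \ K, φhat j ω < φhat i ω) → Khat ω = K)
    (hlaw : ∀ i j : ι, i ≠ j →
      Measure.map (fun ω => φhat i ω - φhat j ω) P
        = gaussianReal (φ i - φ j) (Real.toNNReal ((σ i j) ^ 2 / M)))
    (𝕂 : Finset (Finset ι)) (h𝕂 : ∀ K ∈ 𝕂, K ⊆ N ∧ K.card = k) :
    ∑ K ∈ 𝕂, (1 - ∑ i ∈ K, ∑ j ∈ N \ K,
        cdf (gaussianReal 0 1) (Real.sqrt M * (φ j - φ i) / σ i j))
      ≤ (P {ω | Khat ω ∈ 𝕂}).toReal := by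
  classical
  -- The "good" event for a subset K
  set E : Finset ι → Set Ω :=
    fun K => {ω | ∀ i ∈ K, ∀ j ∈ N \ K, φhat j ω < φhat i ω} with hE_def
  have hEmeas : ∀ K : Finset ι, MeasurableSet (E K) := by
    intro K
    have : E K = ⋂ i ∈ K, ⋂ j ∈ N \ K, {ω | φhat j ω < φhat i ω} := by
      ext ω; simp only [hE_def, Set.mem_iInter, Set.mem_setOf_eq]
    rw [this]
    exact MeasurableSet.biInter K.countable_toSet fun i _ =>
      MeasurableSet.biInter (N \ K).countable_toSet fun j _ =>
        measurableSet_lt (hmeas j) (hmeas i)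
  -- each single-pair probability
  have hpair : ∀ i ∈ N, ∀ j ∈ N, i ≠ j →
      P {ω | φhat i ω ≤ φhat j ω}
        = ENNReal.ofReal (cdf (gaussianReal 0 1) (Real.sqrt M * (φ j - φ i) / σ i j)) := by
    intro i _ j _ hij
    have h1 : {ω | φhat i ω ≤ φhat j ω} = {ω | (φhat i ω - φhat j ω) ≤ 0} := by
      ext ω; simp [sub_nonpos]
    rw [h1, gauss_prob_eq P (fun ω => φhat i ω - φhat j ω) ((hmeas i).sub (hmeas j)) (φ i - φ j) (σ i j)
      (hσ i j hij) M hM (hlaw i j hij)]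
    rw [neg_sub]
  -- lower bound for each K in 𝕂
  have hKbound : ∀ K ∈ 𝕂,
      (1 - ∑ i ∈ K, ∑ j ∈ N \ K,
        cdf (gaussianReal 0 1) (Real.sqrt M * (φ j - φ i) / σ i j)) ≤ (P (E K)).toReal := by
    intro K hK
    obtain ⟨hKN, hKcard⟩ := h𝕂 K hK
    have hcompl : (E K)ᶜ ⊆ ⋃ i ∈ K, ⋃ j ∈ N \ K, {ω | φhat i ω ≤ φhat j ω} := by
      intro ω hω
      simp only [hE_def, Set.mem_compl_iff, Set.mem_setOf_eq, not_forall, not_lt] at hω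
      obtain ⟨i, hi, j, hj, hle⟩ := hω
      exact Set.mem_biUnion hi (Set.mem_biUnion hj hle)
    have hPc : P ((E K)ᶜ) ≤ ENNReal.ofReal (∑ i ∈ K, ∑ j ∈ N \ K,
        cdf (gaussianReal 0 1) (Real.sqrt M * (φ j - φ i) / σ i j)) := by
      calc P ((E K)ᶜ) ≤ P (⋃ i ∈ K, ⋃ j ∈ N \ K, {ω | φhat i ω ≤ φhat j ω}) :=
            measure_mono hcompl
        _ ≤ ∑ i ∈ K, P (⋃ j ∈ N \ K, {ω | φhat i ω ≤ φhat j ω}) :=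
            measure_biUnion_finset_le _ _
        _ ≤ ∑ i ∈ K, ∑ j ∈ N \ K, P {ω | φhat i ω ≤ φhat j ω} :=
            Finset.sum_le_sum fun i _ => measure_biUnion_finset_le _ _
        _ = ∑ i ∈ K, ∑ j ∈ N \ K, ENNReal.ofReal
              (cdf (gaussianReal 0 1) (Real.sqrt M * (φ j - φ i) / σ i j)) := by
            refine Finset.sum_congr rfl fun i hi => Finset.sum_congr rfl fun j hj => ?_
            have hjN : j ∈ N := (Finset.mem_sdiff.mp hj).1
            have hij : i ≠ j := fun h => (Finset.mem_sdiff.mp hj).2 (h ▸ hi)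
            exact hpair i (hKN hi) j hjN hij
        _ = ENNReal.ofReal (∑ i ∈ K, ∑ j ∈ N \ K,
              cdf (gaussianReal 0 1) (Real.sqrt M * (φ j - φ i) / σ i j)) := by
            rw [ENNReal.ofReal_sum_of_nonneg fun i _ =>
              Finset.sum_nonneg fun j _ => cdf_nonneg _ _]
            exact Finset.sum_congr rfl fun i _ =>
              (ENNReal.ofReal_sum_of_nonneg fun j _ => cdf_nonneg _ _).symm
    have hPcR : (P ((E K)ᶜ)).toReal ≤ ∑ i ∈ K, ∑ j ∈ N \ K,
        cdf (gaussianReal 0 1) (Real.sqrt M * (φ j - φ i) / σ i j) :=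
      ENNReal.toReal_le_of_le_ofReal
        (Finset.sum_nonneg fun i _ => Finset.sum_nonneg fun j _ => cdf_nonneg _ _) hPc
    have hadd : (P (E K)).toReal + (P ((E K)ᶜ)).toReal = 1 := by
      rw [← ENNReal.toReal_add (measure_ne_top _ _) (measure_ne_top _ _),
        measure_add_measure_compl (hEmeas K)]
      simp
    linarith
  -- the events E K, K ∈ 𝕂, are pairwise disjoint and included in the target event
  have hdisj : (𝕂 : Set (Finset ι)).PairwiseDisjoint E := by
    intro K hK K' hK' hKK'
    simp only [Function.onFun]
    rw [Set.disjoint_left]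
    intro ω hωK hωK'
    have h1 := hsel ω K (h𝕂 K hK).1 (h𝕂 K hK).2 hωK
    have h2 := hsel ω K' (h𝕂 K' hK').1 (h𝕂 K' hK').2 hωK'
    exact hKK' (h1 ▸ h2)
  have hsub : (⋃ K ∈ 𝕂, E K) ⊆ {ω | Khat ω ∈ 𝕂} := by
    intro ω hω
    simp only [Set.mem_iUnion] at hω
    obtain ⟨K, hK, hωK⟩ := hω
    have := hsel ω K (h𝕂 K hK).1 (h𝕂 K hK).2 hωK
    simpa [this] using hK
  calc ∑ K ∈ 𝕂, (1 - ∑ i ∈ K, ∑ j ∈ N \ K,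
        cdf (gaussianReal 0 1) (Real.sqrt M * (φ j - φ i) / σ i j))
      ≤ ∑ K ∈ 𝕂, (P (E K)).toReal := Finset.sum_le_sum hKbound
    _ = (∑ K ∈ 𝕂, P (E K)).toReal :=
        (ENNReal.toReal_sum fun K _ => measure_ne_top _ _).symm
    _ = (P (⋃ K ∈ 𝕂, E K)).toReal := by
        rw [measure_biUnion_finset hdisj fun K _ => hEmeas K]
    _ ≤ (P {ω | Khat ω ∈ 𝕂}).toReal :=
        ENNReal.toReal_mono (measure_ne_top _ _) (measure_mono hsub)
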